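/- For every integer k ≥ 9 and every integer n ≥ k + 1, f(n)² − f(n−k)·f(n+k) > 0. -/

import Mathlib

/-- `f n` is the number of relatively prime subsets of `{1, 2, ..., n}`,
i.e. subsets `A` with `gcd A = 1` (such subsets are automatically nonempty). -/
def f (n : ℕ) : ℕ :=
  ((Finset.Icc 1 n).powerset.filter (fun A => A.gcd id = 1)).card

lemma card_dvd_filter (n d : ℕ) : ((Finset.Icc 1 n).filter (fun x => d ∣ x)).card = n / d := by
  rw [show Finset.Icc 1 n = Finset.Ioc 0 n from Finset.Icc_add_one_left_eq_Ioc 0 n]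
  exact Nat.Ioc_filter_dvd_card_eq_div n d

lemma f_upper (m : ℕ) : f m + 2 ^ (m / 2) ≤ 2 ^ m := by
  classical
  set S := (Finset.Icc 1 m).powerset.filter (fun A => A.gcd id = 1) with hS
  set T := ((Finset.Icc 1 m).filter (fun x => 2 ∣ x)).powerset with hT
  have hdisj : Disjoint S T := by
    rw [Finset.disjoint_left]
    intro A hA hAT
    rw [hS, Finset.mem_filter] at hA
    rw [hT, Finset.mem_powerset] at hAT
    have h2 : (2:ℕ) ∣ A.gcd id :=
      Finset.dvd_gcd fun x hx => (Finset.mem_filter.mp (hAT hx)).2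
    rw [hA.2] at h2
    exact absurd h2 (by norm_num)
  have hsub : S ∪ T ⊆ (Finset.Icc 1 m).powerset := by
    intro A hA
    rcases Finset.mem_union.mp hA with h | h
    · exact Finset.mem_of_mem_filter A h
    · rw [Finset.mem_powerset]
      exact (Finset.mem_powerset.mp h).trans (Finset.filter_subset _ _)
  have hle := Finset.card_le_card hsub
  rw [Finset.card_union_of_disjoint hdisj, Finset.card_powerset, Finset.card_powerset,
    card_dvd_filter, Nat.card_Icc] at hle
  simpa [f] using hle

lemma two_mul_le_two_pow {e : ℕ} (he : 2 ≤ e) : 2 * e ≤ 2 ^ e := by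
  induction e with
  | zero => omega
  | succ t ih =>
    rcases Nat.lt_or_ge t 2 with h | h
    · interval_cases t <;> norm_num
    · have h1 := ih h
      have h2 : (2:ℕ) ≤ 2 ^ t := by
        calc (2:ℕ) = 2 ^ 1 := rfl
        _ ≤ 2 ^ t := Nat.pow_le_pow_right (by norm_num) (by omega)
      rw [pow_succ]
      omega

lemma f_lower {n : ℕ} (hn : 10 ≤ n) : 2 ^ n ≤ f n + 2 ^ (n / 2 + 2) := by
  classical
  have hsplit : ((Finset.Icc 1 n).powerset.filter (fun A => A.gcd id = 1)).card
      + ((Finset.Icc 1 n).powerset.filter (fun A => ¬ A.gcd id = 1)).card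
      = 2 ^ n := by
    rw [Finset.card_filter_add_card_filter_not, Finset.card_powerset, Nat.card_Icc]
    norm_num
  set bad := (Finset.Icc 1 n).powerset.filter (fun A => ¬ A.gcd id = 1) with hbad
  have hbsub : bad ⊆ insert ∅ ((Finset.Icc 2 n).biUnion
      (fun d => ((Finset.Icc 1 n).filter (fun x => d ∣ x)).powerset)) := by
    intro A hA
    rw [hbad, Finset.mem_filter, Finset.mem_powerset] at hA
    rcases eq_or_ne A ∅ with h | h
    · simp [h]
    · rw [Finset.mem_insert]
      right
      rw [Finset.mem_biUnion]
      obtain ⟨x, hx⟩ := Finset.nonempty_iff_ne_empty.mpr h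
      refine ⟨A.gcd id, ?_, ?_⟩
      · rw [Finset.mem_Icc]
        have hd : A.gcd id ∣ x := Finset.gcd_dvd hx
        have hx1 : 1 ≤ x ∧ x ≤ n := Finset.mem_Icc.mp (hA.1 hx)
        have hne : A.gcd id ≠ 1 := hA.2
        have hpos : A.gcd id ≠ 0 := by
          intro h0
          have hx0 : x = 0 := Nat.eq_zero_of_zero_dvd (h0 ▸ hd)
          omega
        have := Nat.le_of_dvd (by omega) hd
        omega
      · rw [Finset.mem_powerset]
        intro a ha
        rw [Finset.mem_filter]
        exact ⟨hA.1 ha, Finset.gcd_dvd ha⟩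
  have hcard : bad.card ≤ 1 + ∑ d ∈ Finset.Icc 2 n, 2 ^ (n / d) := by
    have h1 := Finset.card_le_card hbsub
    have h2 := Finset.card_insert_le (∅ : Finset ℕ)
      ((Finset.Icc 2 n).biUnion (fun d => ((Finset.Icc 1 n).filter (fun x => d ∣ x)).powerset))
    have h3 := Finset.card_biUnion_le (s := Finset.Icc 2 n)
      (t := fun d => ((Finset.Icc 1 n).filter (fun x => d ∣ x)).powerset)
    have h4 : ∑ d ∈ Finset.Icc 2 n, (((Finset.Icc 1 n).filter (fun x => d ∣ x)).powerset).card
        = ∑ d ∈ Finset.Icc 2 n, 2 ^ (n / d) := by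
      apply Finset.sum_congr rfl
      intro d _
      rw [Finset.card_powerset, card_dvd_filter]
    omega
  have hsum : ∑ d ∈ Finset.Icc 2 n, 2 ^ (n / d)
      ≤ 2 ^ (n / 2) + 2 ^ (n / 3) + (n - 3) * 2 ^ (n / 4) := by
    have h1 : Finset.Icc 2 n = insert 2 (insert 3 (Finset.Icc 4 n)) := by
      ext x
      simp only [Finset.mem_Icc, Finset.mem_insert]
      omega
    rw [h1, Finset.sum_insert (by simp [Finset.mem_Icc]), Finset.sum_insert (by simp)]
    have h2 : ∑ d ∈ Finset.Icc 4 n, 2 ^ (n / d) ≤ ∑ d ∈ Finset.Icc 4 n, 2 ^ (n / 4) := by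
      apply Finset.sum_le_sum
      intro d hd
      exact Nat.pow_le_pow_right (by norm_num)
        (Nat.div_le_div_left (Finset.mem_Icc.mp hd).1 (by norm_num))
    have h3 : ∑ d ∈ Finset.Icc 4 n, (2:ℕ) ^ (n / 4) = (n - 3) * 2 ^ (n / 4) := by
      rw [Finset.sum_const, Nat.card_Icc, smul_eq_mul,
        show n + 1 - 4 = n - 3 by omega]
    omega
  have harith : 1 + (2 ^ (n / 2) + 2 ^ (n / 3) + (n - 3) * 2 ^ (n / 4)) ≤ 2 ^ (n / 2 + 2) := by
    have h3 : 2 ^ (n / 3) ≤ 2 ^ (n / 2) :=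
      Nat.pow_le_pow_right (by norm_num) (Nat.div_le_div_left (by norm_num) (by norm_num))
    set e := n / 2 - n / 4 with he
    have hkey : n - 2 ≤ 2 ^ (e + 1) := by
      have he2 : 2 ≤ e := by omega
      have hne : n ≤ 4 * e + 2 := by omega
      have := two_mul_le_two_pow he2
      calc n - 2 ≤ 2 * (2 * e) := by omega
      _ ≤ 2 * 2 ^ e := by omega
      _ = 2 ^ (e + 1) := by rw [pow_succ]; ring
    have hp4 : 1 ≤ 2 ^ (n / 4) := Nat.one_le_two_pow
    have hc : 1 + (n - 3) * 2 ^ (n / 4) ≤ (n - 2) * 2 ^ (n / 4) := by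
      have h43 : n - 2 = (n - 3) + 1 := by omega
      rw [h43, add_mul, one_mul]
      omega
    have hmul : (n - 2) * 2 ^ (n / 4) ≤ 2 ^ (n / 2 + 1) := by
      calc (n - 2) * 2 ^ (n / 4) ≤ 2 ^ (e + 1) * 2 ^ (n / 4) :=
            Nat.mul_le_mul_right _ hkey
      _ = 2 ^ (e + 1 + n / 4) := by rw [← pow_add]
      _ = 2 ^ (n / 2 + 1) := by congr 1; omega
    have hexp2 : 2 ^ (n / 2 + 2) = 2 ^ (n / 2) + 2 ^ (n / 2) + 2 ^ (n / 2 + 1) := by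
      rw [pow_add, pow_add]; ring
    omega
  have : bad.card ≤ 2 ^ (n / 2 + 2) := by omega
  have hfn : f n = ((Finset.Icc 1 n).powerset.filter (fun A => A.gcd id = 1)).card := rfl
  omega

theorem stmt_11 (k n : ℕ) (hk : 9 ≤ k) (hn : k + 1 ≤ n) :
    (f n : ℤ) ^ 2 - f (n - k) * f (n + k) > 0 := by
  have h10 : 10 ≤ n := by omega
  have hA := f_lower h10
  have hB := f_upper (n - k)
  have hC : f (n + k) ≤ 2 ^ (n + k) := by
    calc f (n + k) ≤ f (n + k) + 2 ^ ((n + k) / 2) := Nat.le_add_right _ _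
    _ ≤ 2 ^ (n + k) := f_upper (n + k)
  have haZ : (2:ℤ) ^ n ≤ (f n : ℤ) + 2 ^ (n / 2 + 2) := by exact_mod_cast hA
  have hbZ : (f (n - k) : ℤ) + 2 ^ ((n - k) / 2) ≤ 2 ^ (n - k) := by exact_mod_cast hB
  have hcZ : (f (n + k) : ℤ) ≤ 2 ^ (n + k) := by exact_mod_cast hC
  have hApos : (0:ℤ) ≤ 2 ^ n - 2 ^ (n / 2 + 2) := by
    have : (2:ℤ) ^ (n / 2 + 2) ≤ 2 ^ n := pow_le_pow_right₀ (by norm_num) (by omega)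
    linarith
  have hA0 : (2:ℤ) ^ n - 2 ^ (n / 2 + 2) ≤ (f n : ℤ) := by linarith
  have hsq : (2:ℤ) ^ n * 2 ^ n - 2 ^ (n + n / 2 + 3) ≤ (f n : ℤ) ^ 2 := by
    have h1 : ((2:ℤ) ^ n - 2 ^ (n / 2 + 2)) ^ 2 ≤ (f n : ℤ) ^ 2 :=
      pow_le_pow_left₀ hApos hA0 2
    have h2 : ((2:ℤ) ^ n - 2 ^ (n / 2 + 2)) ^ 2
        = 2 ^ n * 2 ^ n - 2 ^ (n + n / 2 + 3) + 2 ^ (n / 2 + 2) * 2 ^ (n / 2 + 2) := by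
      rw [show n + n / 2 + 3 = n + (n / 2 + 2) + 1 by omega, pow_add, pow_add, pow_one]
      ring
    nlinarith [mul_self_nonneg ((2:ℤ) ^ (n / 2 + 2))]
  have hB0 : (0:ℤ) ≤ (f (n - k) : ℤ) := Int.natCast_nonneg _
  have hC0 : (0:ℤ) ≤ (f (n + k) : ℤ) := Int.natCast_nonneg _
  have hprod : (f (n - k) : ℤ) * (f (n + k) : ℤ)
      ≤ 2 ^ n * 2 ^ n - 2 ^ ((n - k) / 2 + (n + k)) := by
    have hBle : (f (n - k) : ℤ) ≤ 2 ^ (n - k) - 2 ^ ((n - k) / 2) := by linarith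
    have hB2 : (0:ℤ) ≤ 2 ^ (n - k) - 2 ^ ((n - k) / 2) := by
      have : (2:ℤ) ^ ((n - k) / 2) ≤ 2 ^ (n - k) :=
        pow_le_pow_right₀ (by norm_num) (Nat.div_le_self _ _)
      linarith
    have h1 : (f (n - k) : ℤ) * (f (n + k) : ℤ)
        ≤ ((2:ℤ) ^ (n - k) - 2 ^ ((n - k) / 2)) * 2 ^ (n + k) :=
      mul_le_mul hBle hcZ hC0 hB2
    have h2 : ((2:ℤ) ^ (n - k) - 2 ^ ((n - k) / 2)) * 2 ^ (n + k)
        = 2 ^ n * 2 ^ n - 2 ^ ((n - k) / 2 + (n + k)) := by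
      rw [sub_mul, ← pow_add, ← pow_add, show n - k + (n + k) = n + n by omega, pow_add]
    linarith
  have hgap : (2:ℤ) ^ (n + n / 2 + 3) < 2 ^ ((n - k) / 2 + (n + k)) := by
    apply pow_lt_pow_right₀ (by norm_num) (by omega)
  linarith
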